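/- If G is a noncomplete connected graph on n vertices with δ(G) ≥ (n−1)/2, then pc(G) = 2. -/

import Mathlib

open SimpleGraph

/-- An edge-coloring `c` with `k` colors is a *proper connection coloring* of `G`
if every pair of vertices is joined by a path whose consecutive edges have distinct colors. -/
def ProperConnColoring {V : Type*} (G : SimpleGraph V) {k : ℕ} (c : Sym2 V → Fin k) : Prop :=
  ∀ u v : V, ∃ p : G.Walk u v, p.IsPath ∧ (p.edges.map c).Chain' (· ≠ ·)

/-- The proper connection number of `G`. -/
noncomputable def pc {V : Type*} (G : SimpleGraph V) : ℕ :=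
  sInf {k | ∃ c : Sym2 V → Fin k, ProperConnColoring G c}


section AuxHam
open List

lemma walk_of_chain {V : Type*} {G : SimpleGraph V} :
    ∀ (m : List V) (a : V), List.Chain G.Adj a m →
      ∃ p : G.Walk a (m.getLastD a), p.support = a :: m := by
  intro m
  induction m with
  | nil => intro a _; exact ⟨SimpleGraph.Walk.nil, rfl⟩
  | cons c m ih =>
    intro a h
    rw [List.Chain, List.chain_cons] at h
    obtain ⟨p, hp⟩ := ih c h.2
    rw [List.getLastD_cons]
    exact ⟨SimpleGraph.Walk.cons h.1 p, by simp [hp]⟩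

lemma edges_eq_zip {V : Type*} {G : SimpleGraph V} {u v : V} (p : G.Walk u v) :
    p.edges = p.support.zipWith (fun x y => s(x, y)) p.support.tail := by
  induction p with
  | nil => rfl
  | cons h q ih =>
    obtain ⟨t, ht⟩ : ∃ t, q.support = _ :: t := ⟨_, q.support_eq_cons⟩
    rw [SimpleGraph.Walk.edges_cons, SimpleGraph.Walk.support_cons, ih, ht]
    simp

lemma exists_boundary {V : Type*} {G : SimpleGraph V} (c : List V) [DecidableEq V] :
    ∀ {s t : V} (w : G.Walk s t), s ∈ c → t ∉ c → ∃ x y, x ∈ c ∧ y ∉ c ∧ G.Adj x y := by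
  intro s t w
  induction w with
  | nil => intro h1 h2; exact absurd h1 h2
  | @cons u m t h q ih =>
    intro h1 h2
    by_cases hm : m ∈ c
    · exact ih hm h2
    · exact ⟨u, m, h1, hm, h⟩

lemma exists_ham_list {V : Type*} [Fintype V] [DecidableEq V] (G : SimpleGraph V)
    [DecidableRel G.Adj] (hG : G.Connected)
    (hdeg : Fintype.card V ≤ 2 * G.minDegree + 1) :
    ∃ l : List V, l.Nodup ∧ l.Chain' G.Adj ∧ ∀ v, v ∈ l := by
  classical
  have hsymm : flip G.Adj = G.Adj := by
    ext x y; exact ⟨fun h => h.symm, fun h => h.symm⟩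
  set S : Set ℕ := {n | ∃ m : List V, m.Nodup ∧ m.Chain' G.Adj ∧ m.length = n} with hS
  have hSne : S.Nonempty := ⟨0, [], by simp [List.Chain']⟩
  have hSbd : BddAbove S := ⟨Fintype.card V, fun n hn => by
    obtain ⟨m, hm1, _, hm3⟩ := hn; exact hm3 ▸ hm1.length_le_card⟩
  obtain ⟨l, hnd, hch, hlen⟩ := Nat.sSup_mem hSne hSbd
  have hmax : ∀ m : List V, m.Nodup → m.Chain' G.Adj → m.length ≤ l.length :=
    fun m h1 h2 => hlen ▸ le_csSup hSbd ⟨m, h1, h2, rfl⟩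
  refine ⟨l, hnd, hch, ?_⟩
  by_contra hv
  push_neg at hv
  obtain ⟨v, hvl⟩ := hv
  exfalso
  have hlne : l ≠ [] := by
    rintro rfl
    have := hmax [v] (by simp) (by simp [List.Chain'])
    simp at this
  have hL1 : 0 < l.length := List.length_pos_iff.2 hlne
  set a := l.head hlne with ha
  set b := l.getLast hlne with hb
  have hchr : l.reverse.Chain' G.Adj := by rw [List.Chain', List.isChain_reverse]; exact List.IsChain.imp (fun a b h => h.symm) hch
  -- all neighbors of a are in l
  have hAmem : ∀ w, G.Adj a w → w ∈ l := by
    intro w hw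
    by_contra hwl
    have hchw : (w :: l).Chain' G.Adj := by
      rw [List.Chain', List.isChain_cons]
      exact ⟨fun y hy => by rw [List.head?_eq_head hlne] at hy; exact (Option.some_inj.1 hy) ▸ hw.symm, hch⟩
    have := hmax (w :: l) (List.nodup_cons.2 ⟨hwl, hnd⟩) hchw
    simp at this
  have hBmem : ∀ w, G.Adj b w → w ∈ l := by
    intro w hw
    by_contra hwl
    have hrne : l.reverse ≠ [] := by simp [hlne]
    have hhr : l.reverse.head hrne = b := List.head_reverse hrne
    have hchw : (w :: l.reverse).Chain' G.Adj := by
      rw [List.Chain', List.isChain_cons]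
      refine ⟨fun y hy => ?_, hchr⟩
      rw [List.head?_eq_head hrne] at hy
      rw [← Option.some_inj.1 hy, hhr]
      exact hw.symm
    have := hmax (w :: l.reverse) (List.nodup_cons.2 ⟨by simp [hwl], (List.nodup_reverse.2 hnd)⟩) hchw
    simp at this
  -- length bound
  have hcard : l.length + 1 ≤ Fintype.card V :=
    (List.nodup_cons.2 ⟨hvl, hnd⟩).length_le_card
  -- get cycle
  obtain ⟨c, hperm, hcyc⟩ : ∃ c : List V, c ~ l ∧ (c ++ c).Chain' G.Adj := by
    by_cases hab : G.Adj b a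
    · refine ⟨l, List.Perm.refl l, ?_⟩
      rw [List.Chain', List.isChain_append]
      refine ⟨hch, hch, ?_⟩
      intro x hx y hy
      rw [List.getLast?_eq_getLast hlne] at hx
      rw [List.head?_eq_head hlne] at hy
      rw [← Option.some_inj.1 hx, ← Option.some_inj.1 hy]
      exact hab
    · have hanv : a ≠ v := fun h => hvl (h ▸ List.head_mem hlne)
      have hn2 : 2 ≤ Fintype.card V := Fintype.one_lt_card_iff.2 ⟨a, v, hanv⟩
      have hL2 : 2 ≤ l.length := by
        by_contra h
        have hL : l.length = 1 := by omega
        obtain ⟨z, hz⟩ := List.length_eq_one_iff.1 hL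
        have haz : a = z := List.mem_singleton.1 (hz ▸ List.head_mem hlne)
        have hmd : 1 ≤ G.minDegree := by omega
        have hdq : 1 ≤ G.degree a := le_trans hmd (G.minDegree_le_degree a)
        obtain ⟨w, hw⟩ := Finset.card_pos.1
          (show 0 < (G.neighborFinset a).card by rw [G.card_neighborFinset_eq_degree]; omega)
        have hwadj : G.Adj a w := (G.mem_neighborFinset a w).1 hw
        have hmem := hAmem w hwadj
        rw [hz, List.mem_singleton] at hmem
        exact hwadj.ne' (by rw [hmem, haz])
      have ha0 : a = l[0]'hL1 := List.head_eq_getElem hlne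
      have hbL : b = l[l.length-1]'(by omega) := List.getLast_eq_getElem hlne
      have hidxa : ∀ w, G.Adj a w → l.idxOf w < l.length ∧ l.idxOf w ≠ 0 := by
        intro w hw
        have hmem := hAmem w hw
        have hlt : l.idxOf w < l.length := List.idxOf_lt_length_iff.2 hmem
        refine ⟨hlt, fun h0 => ?_⟩
        have hiw : l[l.idxOf w]'hlt = w := List.getElem_idxOf hlt
        apply hw.ne
        rw [← hiw, ha0]
        congr 1
        omega
      have hidxb : ∀ w, G.Adj b w → l.idxOf w < l.length ∧ l.idxOf w ≠ l.length - 1 := by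
        intro w hw
        have hmem := hBmem w hw
        have hlt : l.idxOf w < l.length := List.idxOf_lt_length_iff.2 hmem
        refine ⟨hlt, fun h0 => ?_⟩
        have hiw : l[l.idxOf w]'hlt = w := List.getElem_idxOf hlt
        apply hw.ne
        rw [← hiw, hbL]
        congr 1
        omega
      set A := (G.neighborFinset a).image (fun w => l.idxOf w - 1) with hA
      set B := (G.neighborFinset b).image (fun w => l.idxOf w) with hB
      have hAsub : A ⊆ Finset.range (l.length-1) := by
        intro i hi
        rw [hA, Finset.mem_image] at hi
        obtain ⟨w, hw, hwi⟩ := hi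
        have := hidxa w ((G.mem_neighborFinset a w).1 hw)
        rw [Finset.mem_range]
        omega
      have hBsub : B ⊆ Finset.range (l.length-1) := by
        intro i hi
        rw [hB, Finset.mem_image] at hi
        obtain ⟨w, hw, hwi⟩ := hi
        have := hidxb w ((G.mem_neighborFinset b w).1 hw)
        rw [Finset.mem_range]
        omega
      have hinj : ∀ w1 w2 : V, w1 ∈ l → w2 ∈ l → l.idxOf w1 = l.idxOf w2 → w1 = w2 := by
        intro w1 w2 h1 h2 he
        have hl1 : l.idxOf w1 < l.length := List.idxOf_lt_length_iff.2 h1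
        have hl2 : l.idxOf w2 < l.length := List.idxOf_lt_length_iff.2 h2
        rw [← List.getElem_idxOf hl1, ← List.getElem_idxOf hl2]
        congr 1
      have hAcard : A.card = G.degree a := by
        rw [hA, ← G.card_neighborFinset_eq_degree]
        apply Finset.card_image_of_injOn
        intro w1 h1 w2 h2 he
        simp only [Finset.mem_coe] at h1 h2
        have a1 := hidxa w1 ((G.mem_neighborFinset a w1).1 h1)
        have a2 := hidxa w2 ((G.mem_neighborFinset a w2).1 h2)
        apply hinj _ _ (hAmem _ ((G.mem_neighborFinset a w1).1 h1))
          (hAmem _ ((G.mem_neighborFinset a w2).1 h2))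
        simp only at he
        omega
      have hBcard : B.card = G.degree b := by
        rw [hB, ← G.card_neighborFinset_eq_degree]
        apply Finset.card_image_of_injOn
        intro w1 h1 w2 h2 he
        simp only [Finset.mem_coe] at h1 h2
        exact hinj _ _ (hBmem _ ((G.mem_neighborFinset b w1).1 h1))
          (hBmem _ ((G.mem_neighborFinset b w2).1 h2)) he
      have hsum : l.length ≤ A.card + B.card := by
        have da := G.minDegree_le_degree a
        have db := G.minDegree_le_degree b
        rw [hAcard, hBcard]
        omega
      have hinter : (A ∩ B).Nonempty := by
        rw [← Finset.card_pos]
        have hu : (A ∪ B).card ≤ l.length - 1 :=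
          le_trans (Finset.card_le_card (Finset.union_subset hAsub hBsub)) (by simp)
        have := Finset.card_union_add_card_inter A B
        omega
      obtain ⟨i, hi⟩ := hinter
      obtain ⟨w1, hw1, hw1i⟩ := Finset.mem_image.1 (Finset.mem_inter.1 hi).1
      obtain ⟨w2, hw2, hw2i⟩ := Finset.mem_image.1 (Finset.mem_inter.1 hi).2
      have hw1adj : G.Adj a w1 := (G.mem_neighborFinset a w1).1 hw1
      have hw2adj : G.Adj b w2 := (G.mem_neighborFinset b w2).1 hw2
      have h1 := hidxa w1 hw1adj
      have h2 := hidxb w2 hw2adj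
      have hidx1 : l.idxOf w1 = i + 1 := by omega
      have hidx2 : l.idxOf w2 = i := by omega
      have hi1L : i + 1 < l.length := by omega
      have hiL : i < l.length - 1 := by omega
      have hl1 : l[i+1]'hi1L = w1 := by
        have h' := List.getElem_idxOf h1.1
        simp only [hidx1] at h'
        exact h'
      have hl2 : l[i]'(by omega) = w2 := by
        have h' := List.getElem_idxOf h2.1
        simp only [hidx2] at h'
        exact h'
      have hAdj1 : G.Adj a (l[i+1]'hi1L) := by rw [hl1]; exact hw1adj
      have hAdj2 : G.Adj b (l[i]'(by omega)) := by rw [hl2]; exact hw2adj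
      have htne : l.take (i+1) ≠ [] := by
        apply List.length_pos_iff.1
        rw [List.length_take]
        omega
      have hdne : l.drop (i+1) ≠ [] := by
        apply List.length_pos_iff.1
        rw [List.length_drop]
        omega
      have hdrne : (l.drop (i+1)).reverse ≠ [] := by simp [hdne]
      have hlast_t : (l.take (i+1)).getLast? = some (l[i]'(by omega)) := by
        rw [List.getLast?_eq_getElem?, List.getElem?_take]
        simp only [List.length_take]
        rw [if_pos (by omega)]
        rw [List.getElem?_eq_getElem (by omega)]
        congr 1
        congr 1
        omega
      have hhead_t : (l.take (i+1)).head? = some a := by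
        rw [List.head?_eq_getElem?, List.getElem?_take, if_pos (by omega),
          List.getElem?_eq_getElem hL1]
        rw [ha0]
      have hhead_d : (l.drop (i+1)).head? = some (l[i+1]'hi1L) := by
        rw [List.head?_eq_getElem?, List.getElem?_drop, List.getElem?_eq_getElem (by omega)]
      have hlast_d : (l.drop (i+1)).getLast? = some b := by
        rw [List.getLast?_eq_getElem?, List.getElem?_drop, List.length_drop]
        rw [List.getElem?_eq_getElem (by omega), hbL]
        congr 1
        congr 1
        omega
      have hcht : (l.take (i+1)).Chain' G.Adj := List.IsChain.prefix hch (List.take_prefix _ _)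
      have hchd : (l.drop (i+1)).Chain' G.Adj := List.IsChain.infix hch (List.drop_suffix _ _).isInfix
      have hchdr : ((l.drop (i+1)).reverse).Chain' G.Adj := by
        rw [List.Chain', List.isChain_reverse]
        exact List.IsChain.imp (fun a b h => h.symm) hchd
      have hchc : (l.take (i+1) ++ (l.drop (i+1)).reverse).Chain' G.Adj := by
        rw [List.Chain', List.isChain_append]
        refine ⟨hcht, hchdr, ?_⟩
        intro x hx y hy
        rw [hlast_t] at hx
        rw [List.head?_reverse, hlast_d] at hy
        rw [← Option.some_inj.1 hx, ← Option.some_inj.1 hy]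
        exact hAdj2.symm
      refine ⟨l.take (i+1) ++ (l.drop (i+1)).reverse, ?_, ?_⟩
      · calc l.take (i+1) ++ (l.drop (i+1)).reverse
            ~ l.take (i+1) ++ l.drop (i+1) := List.Perm.append_left _ (List.reverse_perm _)
          _ = l := List.take_append_drop _ _
      · rw [List.Chain', List.isChain_append]
        refine ⟨hchc, hchc, ?_⟩
        intro x hx y hy
        rw [List.getLast?_append, List.getLast?_reverse, hhead_d] at hx
        rw [List.head?_append, hhead_t] at hy
        simp only [Option.some_or] at hx hy
        rw [← Option.some_inj.1 hx, ← Option.some_inj.1 hy]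
        exact hAdj1.symm
  -- extend using connectivity
  have hvc : v ∉ c := fun h => hvl (hperm.mem_iff.1 h)
  have hac : a ∈ c := hperm.mem_iff.2 (List.head_mem hlne)
  obtain ⟨x, y, hx, hy, hxy⟩ := exists_boundary c (hG.preconnected a v).some hac hvc
  obtain ⟨c1, c2, hdecomp⟩ := List.append_of_mem hx
  have hrinf : (x :: (c2 ++ c1)) <:+: (c ++ c) :=
    ⟨c1, x :: c2, by rw [hdecomp]; simp⟩
  have hrch : (x :: (c2 ++ c1)).Chain' G.Adj := List.IsChain.infix hcyc hrinf
  have hrperm : (x :: (c2 ++ c1)) ~ c := by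
    calc (x :: (c2 ++ c1)) = (x :: c2) ++ c1 := by simp
    _ ~ c1 ++ (x :: c2) := List.perm_append_comm
    _ = c := hdecomp.symm
  have hfin : (y :: x :: (c2 ++ c1)).Chain' G.Adj := by
    rw [List.Chain', List.isChain_cons]
    exact ⟨fun z hz => by simp at hz; exact hz ▸ hxy.symm, hrch⟩
  have hfinnd : (y :: x :: (c2 ++ c1)).Nodup :=
    List.nodup_cons.2 ⟨fun h => hy (hrperm.mem_iff.1 h),
      hrperm.symm.nodup (hperm.symm.nodup hnd)⟩
  have := hmax _ hfinnd hfin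
  have hclen : (x :: (c2 ++ c1)).length = l.length := hrperm.length_eq.trans hperm.length_eq
  simp only [List.length_cons, hclen] at this
  omega

lemma subwalk {V : Type*} [DecidableEq V] {G : SimpleGraph V} {l : List V}
    (hnd : l.Nodup) (hch : l.Chain' G.Adj) {i j : ℕ} (hij : i ≤ j) (hj : j < l.length) :
    ∃ p : G.Walk (l[i]'(lt_of_le_of_lt hij hj)) (l[j]'hj),
      p.IsPath ∧ ∃ _ : p.edges.length = j - i, ∀ t, (ht : t < j - i) →
        p.edges[t]'(by omega) = s(l[i+t]'(by omega), l[i+t+1]'(by omega)) := by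
  have hm_len : ((l.drop i).take (j-i+1)).length = j-i+1 := by
    rw [List.length_take, List.length_drop]; omega
  have hmget : ∀ t, (ht : t < j-i+1) →
      ((l.drop i).take (j-i+1))[t]'(by omega) = l[i+t]'(by omega) := by
    intro t ht
    rw [List.getElem_take, List.getElem_drop]
  have hmne : (l.drop i).take (j-i+1) ≠ [] := by
    apply List.length_pos_iff.1
    rw [hm_len]; omega
  have hinf : (l.drop i).take (j-i+1) <:+: l :=
    (List.take_prefix _ _).isInfix.trans (List.drop_suffix _ _).isInfix
  have hchm : ((l.drop i).take (j-i+1)).Chain' G.Adj := List.IsChain.infix hch hinf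
  have hndm : ((l.drop i).take (j-i+1)).Nodup := hinf.sublist.nodup hnd
  obtain ⟨x, m', hxm⟩ := List.exists_cons_of_ne_nil hmne
  have hchain : List.Chain G.Adj x m' := by rw [hxm] at hchm; exact hchm
  obtain ⟨p0, hp0⟩ := walk_of_chain m' x hchain
  have hx : x = l[i]'(lt_of_le_of_lt hij hj) := by
    have h0 := hmget 0 (by omega)
    simp only [hxm, List.getElem_cons_zero] at h0
    simpa using h0
  have hlast : m'.getLastD x = l[j]'hj := by
    have hJ := hmget (j-i) (by omega)
    simp only [hxm] at hJ
    have hlen' : (x :: m').length = j - i + 1 := by rw [← hxm]; exact hm_len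
    have h1 : (x :: m').getLast (List.cons_ne_nil x m') = m'.getLastD x :=
      List.getLast_eq_getLastD _
    have h2 : (x :: m').getLast (List.cons_ne_nil x m') =
        (x :: m')[(x :: m').length - 1]'(by omega) :=
      List.getLast_eq_getElem _
    rw [h1] at h2
    rw [h2]
    have : (x :: m')[(x :: m').length - 1]'(by omega) = (x :: m')[j-i]'(by omega) := by
      congr 1
      omega
    rw [this, hJ]
    congr 1
    omega
  refine ⟨p0.copy hx hlast, ?_, ?_⟩
  · rw [SimpleGraph.Walk.isPath_def, SimpleGraph.Walk.support_copy, hp0, ← hxm]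
    exact hndm
  · have hedge : (p0.copy hx hlast).edges =
        List.zipWith (fun a b => s(a, b)) ((l.drop i).take (j-i+1))
          ((l.drop i).take (j-i+1)).tail := by
      rw [SimpleGraph.Walk.edges_copy, edges_eq_zip, hp0, ← hxm]
    have hlen : (p0.copy hx hlast).edges.length = j - i := by
      rw [hedge, List.length_zipWith, List.length_tail, hm_len]
      omega
    refine ⟨hlen, ?_⟩
    intro t ht
    have h1 : (p0.copy hx hlast).edges[t]'(by omega) =
        s(((l.drop i).take (j-i+1))[t]'(by omega),
          (((l.drop i).take (j-i+1)).tail)[t]'(by rw [List.length_tail, hm_len]; omega)) := by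
      simp only [hedge, List.getElem_zipWith]
    rw [h1, List.getElem_tail, hmget t (by omega), hmget (t+1) (by omega)]
    simp only [Nat.add_assoc]

def pathColor {V : Type*} [DecidableEq V] (l : List V) : Sym2 V → Fin 2 :=
  Sym2.lift ⟨fun u w => ⟨(min (l.idxOf u) (l.idxOf w)) % 2, by omega⟩,
    fun u w => by simp [min_comm]⟩

lemma pathColor_mk {V : Type*} [DecidableEq V] (l : List V) (x y : V) :
    pathColor l s(x, y) = ⟨(min (l.idxOf x) (l.idxOf y)) % 2, by omega⟩ :=
  Sym2.lift_mk _ _ _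

lemma exists_coloring {V : Type*} [Fintype V] [DecidableEq V] (G : SimpleGraph V)
    [DecidableRel G.Adj] (l : List V) (hnd : l.Nodup) (hch : l.Chain' G.Adj)
    (hall : ∀ v, v ∈ l) : ∃ c : Sym2 V → Fin 2, ProperConnColoring G c := by
  classical
  refine ⟨pathColor l, ?_⟩
  have helper : ∀ i j, (hij : i ≤ j) → (hj : j < l.length) →
      ∃ p : G.Walk (l[i]'(lt_of_le_of_lt hij hj)) (l[j]'hj),
        p.IsPath ∧ (p.edges.map (pathColor l)).Chain' (· ≠ ·) := by
    intro i j hij hj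
    obtain ⟨p, hpath, hlen, hget⟩ := subwalk hnd hch hij hj
    refine ⟨p, hpath, ?_⟩
    rw [List.Chain', List.isChain_iff_getElem]
    intro t htl
    simp only [List.length_map] at htl
    simp only [List.get_eq_getElem, List.getElem_map]
    have e1 := hget t (by omega)
    have e2 := hget (t+1) (by omega)
    rw [e1, e2]
    simp only [pathColor_mk]
    simp only [ne_eq, Fin.mk.injEq, List.Nodup.idxOf_getElem hnd]
    omega
  intro u v
  have hu : l.idxOf u < l.length := List.idxOf_lt_length_iff.2 (hall u)
  have hv : l.idxOf v < l.length := List.idxOf_lt_length_iff.2 (hall v)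
  rcases le_total (l.idxOf u) (l.idxOf v) with h | h
  · obtain ⟨p, hpath, hchain⟩ := helper _ _ h hv
    refine ⟨p.copy (List.getElem_idxOf hu) (List.getElem_idxOf hv), ?_, ?_⟩
    · rw [SimpleGraph.Walk.isPath_def, SimpleGraph.Walk.support_copy]
      exact hpath.2
    · rw [SimpleGraph.Walk.edges_copy]
      exact hchain
  · obtain ⟨p, hpath, hchain⟩ := helper _ _ h hu
    refine ⟨(p.copy (List.getElem_idxOf hv) (List.getElem_idxOf hu)).reverse, ?_, ?_⟩
    · apply SimpleGraph.Walk.IsPath.reverse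
      rw [SimpleGraph.Walk.isPath_def, SimpleGraph.Walk.support_copy]
      exact hpath.2
    · rw [SimpleGraph.Walk.edges_reverse, SimpleGraph.Walk.edges_copy, List.map_reverse,
        List.Chain', List.isChain_reverse]
      exact List.IsChain.imp (fun a b hab => hab.symm) hchain

theorem pc_eq_two_of_large_minDegree {V : Type*} [Fintype V] [DecidableEq V]
    (G : SimpleGraph V) [DecidableRel G.Adj]
    (hG : G.Connected) (hnc : G ≠ ⊤)
    (hdeg : ((Fintype.card V : ℝ) - 1) / 2 ≤ G.minDegree) :
    pc G = 2 := by
  classical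
  obtain ⟨v0⟩ := hG.nonempty
  have hpair : ∃ u v : V, u ≠ v ∧ ¬ G.Adj u v := by
    by_contra h
    push_neg at h
    apply hnc
    ext u v
    simp only [SimpleGraph.top_adj]
    exact ⟨fun h' => h'.ne, fun hne => h u v hne⟩
  have hdeg' : Fintype.card V ≤ 2 * G.minDegree + 1 := by
    rw [div_le_iff₀ (by norm_num : (0:ℝ) < 2)] at hdeg
    have h2 : ((Fintype.card V : ℝ)) ≤ ((2 * G.minDegree + 1 : ℕ) : ℝ) := by
      push_cast
      linarith
    exact_mod_cast h2
  obtain ⟨l, hnd, hch, hall⟩ := exists_ham_list G hG hdeg'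
  obtain ⟨c2, hc2⟩ := exists_coloring G l hnd hch hall
  have h2S : 2 ∈ {k | ∃ c : Sym2 V → Fin k, ProperConnColoring G c} := ⟨c2, hc2⟩
  rw [pc]
  apply _root_.le_antisymm
  · exact Nat.sInf_le h2S
  · apply le_csInf ⟨2, h2S⟩
    rintro k ⟨c, hc⟩
    by_contra hk
    push_neg at hk
    interval_cases k
    · exact (c s(v0, v0)).elim0
    · obtain ⟨u, v, huv, hadj⟩ := hpair
      obtain ⟨p, hp, hchain⟩ := hc u v
      cases p with
      | nil => exact huv rfl
      | cons h q =>
        cases q with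
        | nil => exact hadj h
        | cons h' q' =>
          simp only [SimpleGraph.Walk.edges_cons, List.map_cons] at hchain
          exact (List.isChain_cons_cons.1 hchain).1 (Subsingleton.elim _ _)
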